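/- If n = 5k+4 and e = 1^{e_1}2^{e_2}··· is a partition of n with e_1 < 5k, then for every t-element subset S = {s_1,...,s_t} of the multiset M_e, the rational number n!/(s_1···s_t) is an integer divisible by 5. -/

import Mathlib

/-- For a partition given by its multiset of parts, the multiset
`M_e = ∪_i {1, 2, ..., e_i}` where `e_i` is the number of parts equal to `i`. -/
def Mmultiset (parts : Multiset ℕ) : Multiset ℕ :=
  parts.dedup.bind fun i => (Multiset.range (parts.count i)).map (· + 1)

lemma pv5_mono {a b : ℕ} (h : a ∣ b) (hb : b ≠ 0) :
    padicValNat 5 a ≤ padicValNat 5 b := by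
  haveI : Fact (Nat.Prime 5) := ⟨by norm_num⟩
  exact (padicValNat_dvd_iff_le hb).1 (pow_padicValNat_dvd.trans h)

lemma key5 (k a b : ℕ) (hk : 1 ≤ k) (ha : a ≤ 5 * k - 1) (hab : a + 2 * b ≤ 5 * k + 4) :
    padicValNat 5 (a.factorial * b.factorial) < padicValNat 5 (5 * k + 4).factorial := by
  haveI : Fact (Nat.Prime 5) := ⟨by norm_num⟩
  have hv1 : padicValNat 5 (5 * k + 4).factorial = padicValNat 5 k.factorial + k := by
    rw [padicValNat_factorial_mul_add k (by norm_num : (4:ℕ) < 5), padicValNat_factorial_mul]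
  have hkm : 5 * k - 1 = 5 * (k - 1) + 4 := by omega
  have hv2 : padicValNat 5 (5 * k - 1).factorial
      = padicValNat 5 (k - 1).factorial + (k - 1) := by
    rw [hkm, padicValNat_factorial_mul_add (k - 1) (by norm_num : (4:ℕ) < 5),
      padicValNat_factorial_mul]
  have hmono : padicValNat 5 (k - 1).factorial ≤ padicValNat 5 k.factorial :=
    pv5_mono (Nat.factorial_dvd_factorial (by omega)) (Nat.factorial_ne_zero _)
  have hlt : padicValNat 5 (5 * k - 1).factorial < padicValNat 5 (5 * k + 4).factorial := by
    rw [hv1, hv2]; omega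
  refine lt_of_le_of_lt ?_ hlt
  by_cases hb : b ≤ 4
  · have hb0 : padicValNat 5 b.factorial = 0 := by
      interval_cases b <;> exact padicValNat.eq_zero_of_not_dvd (by decide)
    rw [padicValNat.mul (Nat.factorial_ne_zero _) (Nat.factorial_ne_zero _), hb0, add_zero]
    exact pv5_mono (Nat.factorial_dvd_factorial ha) (Nat.factorial_ne_zero _)
  · have hab' : a + b ≤ 5 * k - 1 := by omega
    exact pv5_mono ((Nat.factorial_mul_factorial_dvd_factorial_add a b).trans
      (Nat.factorial_dvd_factorial hab')) (Nat.factorial_ne_zero _)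

/-- If `n = 5k+4` and `e` is a partition of `n` with fewer than `5k` parts
equal to 1, then for every submultiset `S = {s_1,…,s_t}` of `M_e`, the
rational number `n!/(s_1⋯s_t)` is an integer divisible by 5. -/
theorem factorial_div_prod_divisible (k n : ℕ) (hn : n = 5 * k + 4)
    (e : n.Partition) (he : e.parts.count 1 < 5 * k)
    (S : Multiset ℕ) (hS : S ≤ Mmultiset e.parts) :
    ∃ z : ℤ, (5 : ℤ) ∣ z ∧
      (n.factorial : ℚ) / (S.map fun s => (s : ℚ)).prod = (z : ℚ) := by
  classical
  haveI : Fact (Nat.Prime 5) := ⟨by norm_num⟩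
  set P := e.parts with hPdef
  have hk1 : 1 ≤ k := by omega
  -- the product of `M_e` is the product of factorials of multiplicities
  have hterm : ∀ c : ℕ, ((Multiset.range c).map (· + 1)).prod = c.factorial := by
    intro c
    rw [← Finset.prod_range_add_one_eq_factorial]
    rfl
  have hMprod : (Mmultiset P).prod = ∏ i ∈ P.toFinset, (P.count i).factorial := by
    rw [Mmultiset, Multiset.prod_bind]
    simp only [hterm]
    rw [Finset.prod_eq_multiset_prod, Multiset.toFinset_val]
  set a := P.count 1 with hadef
  set T := P.toFinset.erase 1 with hTdef
  set b := ∑ i ∈ T, P.count i with hbdef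
  have hFdvd : (∏ i ∈ P.toFinset, (P.count i).factorial) ∣ a.factorial * b.factorial := by
    have h2 : (∏ i ∈ T, (P.count i).factorial) ∣ b.factorial :=
      Nat.prod_factorial_dvd_factorial_sum _ _
    by_cases h1 : 1 ∈ P.toFinset
    · rw [← Finset.mul_prod_erase _ _ h1]
      exact mul_dvd_mul dvd_rfl h2
    · rw [Finset.erase_eq_of_notMem h1] at hTdef
      rw [hTdef] at h2
      exact h2.trans (dvd_mul_left _ _)
  -- `a + 2 * b ≤ n`
  have hn' : n = ∑ i ∈ P.toFinset, P.count i * i := by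
    conv_lhs => rw [← e.parts_sum]
    rw [Finset.sum_multiset_count]
    simp [smul_eq_mul]
    rfl
  have hb2 : 2 * b ≤ ∑ i ∈ T, P.count i * i := by
    rw [hbdef, Finset.mul_sum]
    apply Finset.sum_le_sum
    intro i hi
    have hi1 : i ≠ 1 := Finset.ne_of_mem_erase hi
    have hiP : i ∈ P := Multiset.mem_toFinset.1 (Finset.mem_of_mem_erase hi)
    have hpos : 0 < i := e.parts_pos hiP
    have h2i : 2 ≤ i := by omega
    calc 2 * P.count i = P.count i * 2 := mul_comm _ _
      _ ≤ P.count i * i := Nat.mul_le_mul_left _ h2i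
  have hsum : a + 2 * b ≤ n := by
    by_cases h1 : 1 ∈ P.toFinset
    · have hsplit := Finset.add_sum_erase P.toFinset (fun i => P.count i * i) h1
      have : P.count 1 * 1 + ∑ i ∈ T, P.count i * i = n := by rw [hsplit, ← hn']
      omega
    · have ha0 : a = 0 := by
        rw [hadef, Multiset.count_eq_zero]
        exact fun h => h1 (Multiset.mem_toFinset.2 h)
      rw [Finset.erase_eq_of_notMem h1] at hTdef
      have : ∑ i ∈ T, P.count i * i = n := by rw [hTdef, ← hn']
      omega
  have ha1 : a ≤ 5 * k - 1 := by omega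
  have hkey : padicValNat 5 (a.factorial * b.factorial) < padicValNat 5 n.factorial := by
    rw [hn]; exact key5 k a b hk1 ha1 (by omega)
  have hSP : S.prod ∣ a.factorial * b.factorial :=
    (Multiset.prod_dvd_prod_of_le hS).trans (hMprod ▸ hFdvd)
  have hvS : padicValNat 5 S.prod < padicValNat 5 n.factorial :=
    lt_of_le_of_lt (pv5_mono hSP (by positivity)) hkey
  have hdvdfac : S.prod ∣ n.factorial :=
    hSP.trans ((Nat.factorial_mul_factorial_dvd_factorial_add a b).trans
      (Nat.factorial_dvd_factorial (by omega : a + b ≤ n)))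
  have hS0 : S.prod ≠ 0 := by
    intro h
    rw [h] at hdvdfac
    exact Nat.factorial_ne_zero n (zero_dvd_iff.1 hdvdfac)
  set q := n.factorial / S.prod with hqdef
  have hq : S.prod * q = n.factorial := Nat.mul_div_cancel' hdvdfac
  have hq0 : q ≠ 0 := by
    intro h
    rw [h, mul_zero] at hq
    exact Nat.factorial_ne_zero n hq.symm
  have hvq : 1 ≤ padicValNat 5 q := by
    have := padicValNat.mul (p := 5) hS0 hq0
    rw [hq] at this
    omega
  have hq5 : (5 : ℕ) ∣ q := dvd_of_one_le_padicValNat hvq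
  refine ⟨(q : ℤ), by exact_mod_cast hq5, ?_⟩
  have hcast : (S.map fun s => (s : ℚ)).prod = (S.prod : ℚ) := by
    simp
  have hS0Q : (S.prod : ℚ) ≠ 0 := Nat.cast_ne_zero.2 hS0
  rw [hcast, div_eq_iff hS0Q, Int.cast_natCast, ← Nat.cast_mul]
  exact congrArg (Nat.cast : ℕ → ℚ) (hq.symm.trans (mul_comm _ _))
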